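/- Let X be a compact Hausdorff space, μ a deficient topological measure on X with μ(X) < ∞, f a continuous real-valued function on X with f ≤ 0, and V an open set. Then inf{ μ(U ∩ V) : U open, Z(f) ⊆ U } = μ(V) if and only if ∫_V f dμ = 0, where Z(f) = {x ∈ X : f(x) = 0} and ∫_V f dμ := aμ(V) + ∫_a^0 μ(V ∩ f⁻¹((t,∞))) dt for any a ≤ min_{x∈X} f(x). -/

import Mathlib

open MeasureTheory Set Filter Topology ENNReal

/-- A deficient topological measure on a topological space `X`: a set function with values in
`[0,∞]` (recorded on all sets, but constrained only on open and closed sets) that is finitely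
additive on disjoint compact sets, inner regular on open sets with respect to compact sets,
and outer regular on closed sets with respect to open sets. -/
structure DeficientTopologicalMeasure (X : Type*) [TopologicalSpace X] where
  m : Set X → ℝ≥0∞
  additive : ∀ ⦃C K : Set X⦄, IsCompact C → IsCompact K → Disjoint C K →
    m (C ∪ K) = m C + m K
  innerRegular : ∀ ⦃U : Set X⦄, IsOpen U →
    m U = ⨆ (K : Set X) (_ : IsCompact K) (_ : K ⊆ U), m K
  outerRegular : ∀ ⦃F : Set X⦄, IsClosed F →
    m F = ⨅ (U : Set X) (_ : IsOpen U) (_ : F ⊆ U), m U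

lemma DeficientTopologicalMeasure.mono_open {X : Type*} [TopologicalSpace X]
    (μ : DeficientTopologicalMeasure X) {U W : Set X} (hU : IsOpen U) (hW : IsOpen W)
    (h : U ⊆ W) : μ.m U ≤ μ.m W := by
  rw [μ.innerRegular hU, μ.innerRegular hW]
  exact iSup_le fun K => iSup_le fun hK => iSup_le fun hKU =>
    le_iSup_of_le K (le_iSup_of_le hK (le_iSup_of_le (hKU.trans h) le_rfl))

/-- Let `X` be compact Hausdorff, `μ` a deficient topological measure with
`μ(X) < ∞`, `f` continuous with `f ≤ 0`, and `V` open. Then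
`μ_V(Z(f)) = μ(V)` if and only if `∫_V f dμ = 0`, where
`μ_V(Z(f)) = inf{μ(U ∩ V) : U open, Z(f) ⊆ U}` and
`∫_V f dμ = aμ(V) + ∫_a^0 μ(V ∩ f⁻¹((t,∞))) dt` for any `a ≤ min f` (the value being
independent of the choice of `a`). -/
theorem stmt15 {X : Type*} [TopologicalSpace X] [CompactSpace X] [T2Space X]
    (μ : DeficientTopologicalMeasure X) (hμfin : μ.m univ < ∞)
    (f : X → ℝ) (hf : Continuous f) (hf0 : ∀ x, f x ≤ 0)
    (V : Set X) (hV : IsOpen V)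
    (a : ℝ) (ha0 : a ≤ 0) (haf : ∀ x, a ≤ f x) :
    (⨅ (U : Set X) (_ : IsOpen U) (_ : f ⁻¹' {0} ⊆ U), μ.m (U ∩ V)) = μ.m V ↔
      a * (μ.m V).toReal + (∫ t in a..(0 : ℝ), (μ.m (V ∩ f ⁻¹' (Ioi t))).toReal) = 0 := by
  set c : ℝ := (μ.m V).toReal with hc
  set F : ℝ → ℝ := fun t => (μ.m (V ∩ f ⁻¹' (Ioi t))).toReal with hF
  have hVfin : μ.m V < ∞ := (μ.mono_open hV isOpen_univ (subset_univ V)).trans_lt hμfin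
  have hIoi : ∀ t : ℝ, IsOpen (f ⁻¹' (Ioi t)) := fun t => isOpen_Ioi.preimage hf
  have hsub : ∀ t : ℝ, μ.m (V ∩ f ⁻¹' (Ioi t)) ≤ μ.m V := fun t =>
    μ.mono_open (hV.inter (hIoi t)) hV inter_subset_left
  have hsubfin : ∀ t : ℝ, μ.m (V ∩ f ⁻¹' (Ioi t)) ≠ ∞ := fun t =>
    ((hsub t).trans_lt hVfin).ne
  have hFle : ∀ t : ℝ, F t ≤ c := fun t => ENNReal.toReal_mono hVfin.ne (hsub t)
  have hFanti : Antitone F := by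
    intro s t hst
    exact ENNReal.toReal_mono (hsubfin s)
      (μ.mono_open (hV.inter (hIoi t)) (hV.inter (hIoi s))
        (inter_subset_inter_right _ (preimage_mono (Ioi_subset_Ioi hst))))
  have hiInf_le : (⨅ (U : Set X) (_ : IsOpen U) (_ : f ⁻¹' {0} ⊆ U), μ.m (U ∩ V)) ≤ μ.m V := by
    refine iInf_le_of_le univ (iInf_le_of_le isOpen_univ (iInf_le_of_le (subset_univ _) ?_))
    rw [univ_inter]
  rcases eq_or_lt_of_le ha0 with haz | haz
  · -- a = 0
    subst haz
    simp only [intervalIntegral.integral_same, zero_mul, add_zero]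
    constructor
    · intro _; trivial
    · intro _
      refine le_antisymm hiInf_le (le_iInf fun U => le_iInf fun hU => le_iInf fun hZU => ?_)
      have hUuniv : U = univ := eq_univ_of_univ_subset (by
        intro x _
        exact hZU (by simp [le_antisymm (hf0 x) (haf x)]))
      rw [hUuniv, univ_inter]
  · -- a < 0
    constructor
    · intro h
      have key : ∀ t : ℝ, t < 0 → μ.m (V ∩ f ⁻¹' (Ioi t)) = μ.m V := by
        intro t ht
        refine le_antisymm (hsub t) ?_
        have h1 : (⨅ (U : Set X) (_ : IsOpen U) (_ : f ⁻¹' {0} ⊆ U), μ.m (U ∩ V)) ≤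
            μ.m (f ⁻¹' (Ioi t) ∩ V) := by
          refine iInf_le_of_le (f ⁻¹' (Ioi t)) (iInf_le_of_le (hIoi t)
            (iInf_le_of_le ?_ le_rfl))
          intro x hx
          simp only [mem_preimage, mem_singleton_iff] at hx
          simp [mem_preimage, mem_Ioi, hx, ht]
        rw [h, inter_comm] at h1
        exact h1
      have hcongr : ∫ t in a..(0:ℝ), F t = ∫ _ in a..(0:ℝ), c := by
        apply intervalIntegral.integral_congr_ae
        have h0 : ∀ᵐ t : ℝ, t ≠ 0 := by
          rw [ae_iff]
          simp only [not_not]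
          simp [Real.volume_singleton]
        filter_upwards [h0] with t ht0 htmem
        rw [uIoc_of_le ha0] at htmem
        have htlt : t < 0 := lt_of_le_of_ne htmem.2 ht0
        simp only [hF, key t htlt, hc]
      rw [hcongr, intervalIntegral.integral_const, smul_eq_mul]
      ring
    · intro h
      have hint : ∫ t in a..(0:ℝ), F t = -(a * c) := by linarith
      have key : ∀ t ∈ Ioo a (0:ℝ), μ.m (V ∩ f ⁻¹' (Ioi t)) = μ.m V := by
        intro t ht
        have hFt : F t = c := by
          refine le_antisymm (hFle t) ?_
          by_contra hlt
          push_neg at hlt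
          have hi1 : IntervalIntegrable F volume a t := hFanti.intervalIntegrable
          have hi2 : IntervalIntegrable F volume t 0 := hFanti.intervalIntegrable
          have hsplit : (∫ s in a..t, F s) + ∫ s in t..(0:ℝ), F s = ∫ s in a..(0:ℝ), F s :=
            intervalIntegral.integral_add_adjacent_intervals hi1 hi2
          have hb1 : (∫ s in a..t, F s) ≤ (t - a) * c := by
            calc (∫ s in a..t, F s) ≤ ∫ _ in a..t, c :=
                  intervalIntegral.integral_mono_on ht.1.le hi1 intervalIntegrable_const
                    (fun s _ => hFle s)
              _ = (t - a) * c := by rw [intervalIntegral.integral_const, smul_eq_mul]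
          have hb2 : (∫ s in t..(0:ℝ), F s) ≤ (0 - t) * F t := by
            calc (∫ s in t..(0:ℝ), F s) ≤ ∫ _ in t..(0:ℝ), F t :=
                  intervalIntegral.integral_mono_on ht.2.le hi2 intervalIntegrable_const
                    (fun s hs => hFanti hs.1)
              _ = (0 - t) * F t := by rw [intervalIntegral.integral_const, smul_eq_mul]
          have hpos : (0:ℝ) < -t := by linarith [ht.2]
          nlinarith [hint, hsplit, hb1, hb2, mul_lt_mul_of_pos_left hlt hpos]
        have := (ENNReal.toReal_eq_toReal_iff' (hsubfin t) hVfin.ne).mp hFt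
        exact this
      refine le_antisymm hiInf_le (le_iInf fun U => le_iInf fun hU => le_iInf fun hZU => ?_)
      obtain ⟨t, htmem, htsub⟩ : ∃ t ∈ Ioo a (0:ℝ), f ⁻¹' (Ioi t) ⊆ U := by
        by_cases hne : (Uᶜ).Nonempty
        · have hKcl : IsClosed (Uᶜ) := hU.isClosed_compl
          obtain ⟨x₀, hx₀K, hmax⟩ := hKcl.isCompact.exists_isMaxOn hne hf.continuousOn
          have hfx₀ : f x₀ < 0 := by
            refine lt_of_le_of_ne (hf0 x₀) fun h0 => hx₀K (hZU ?_)
            simp [h0]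
          refine ⟨max (f x₀) (a / 2), ⟨lt_max_of_lt_right (by linarith),
            max_lt hfx₀ (by linarith)⟩, ?_⟩
          intro y hy
          by_contra hyU
          have : f y ≤ f x₀ := hmax hyU
          have : max (f x₀) (a / 2) < f y := hy
          have := le_max_left (f x₀) (a / 2)
          linarith
        · rw [not_nonempty_iff_eq_empty, compl_empty_iff] at hne
          exact ⟨a / 2, ⟨by linarith, by linarith⟩, by rw [hne]; exact subset_univ _⟩
      calc μ.m V = μ.m (V ∩ f ⁻¹' (Ioi t)) := (key t htmem).symm
        _ ≤ μ.m (U ∩ V) := μ.mono_open (hV.inter (hIoi t)) (hU.inter hV)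
            (fun x hx => ⟨htsub hx.2, hx.1⟩)
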